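/- Let T, R₀, M, L, 𝔠 > 0. Let X be a real Hilbert space, U a strongly continuous one-parameter group of linear isometries of X, Q ∈ L(X) an orthogonal projection with Q∘U(t) = U(t)∘Q for all t ∈ ℝ, and C_op ∈ L(X). Let f : X → X be Fréchet differentiable with ‖Df(x)‖ ≤ M and ‖Df(x) − Df(y)‖ ≤ L‖x−y‖ for all x, y in the closed ball of radius 2R₀. Let u, ũ ∈ C([0,T],X) with sup_t ‖u(t)‖ ≤ R₀ and sup_t ‖ũ(t)‖ ≤ R₀ satisfy, for some Bochner-integrable h : [0,T] → X, u(t) = U(t)(u(0)) + ∫₀^t U(t−τ)(f(u(τ)) + h(τ)) dτ and ũ(t) = U(t)(ũ(0)) + ∫₀^t U(t−τ)(f(ũ(τ)) + h(τ)) dτ for all t ∈ [0,T], together with C_op(u(t)) = C_op(ũ(t)) for all t ∈ [0,T] (same observation) and (id − Q)(u(t)) = (id − Q)(ũ(t)) for all t ∈ [0,T] (same low-frequency part). Let S be the evolution operator of the potential B(τ) = Q∘Df(ũ(τ)), and assume the observability inequality ‖w₀‖² ≤ 𝔠² ∫₀^T ‖C_op(S(t,0)w₀)‖² dt for all w₀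 in the range of Q. Then there exists a constant K > 0, depending only on T, M, 𝔠 and ‖C_op‖, such that sup_{t∈[0,T]} ‖u(t) − ũ(t)‖ < 1/(K·L) implies u(t) = ũ(t) for all t ∈ [0,T]. -/

import Mathlib

open MeasureTheory Set
open scoped RealInnerProductSpace

/-- Integral form of Gronwall's inequality. -/
theorem my_gronwall {g : ℝ → ℝ} {a b T : ℝ} (hT : 0 ≤ T)
    (hg : ContinuousOn g (Icc 0 T)) (hgpos : ∀ t ∈ Icc (0:ℝ) T, 0 ≤ g t)
    (ha : 0 ≤ a) (hb : 0 ≤ b)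
    (h : ∀ t ∈ Icc (0:ℝ) T, g t ≤ a + b * ∫ τ in (0:ℝ)..t, g τ) :
    ∀ t ∈ Icc (0:ℝ) T, g t ≤ a * Real.exp (b * T) := by
  rcases eq_or_lt_of_le hb with hb0 | hb0
  · intro t ht
    calc g t ≤ a + b * ∫ τ in (0:ℝ)..t, g τ := h t ht
    _ = a := by rw [← hb0]; ring
    _ ≤ a * Real.exp (b * T) := le_mul_of_one_le_right ha (Real.one_le_exp (by positivity))
  have hgI : IntegrableOn g (Icc 0 T) := hg.integrableOn_Icc
  set F : ℝ → ℝ := fun t => ∫ τ in (0:ℝ)..t, g τ with hFdef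
  have hint : ∀ t ∈ Icc (0:ℝ) T, IntervalIntegrable g volume 0 t := by
    intro t ht
    apply ContinuousOn.intervalIntegrable
    apply hg.mono
    rw [uIcc_of_le ht.1]
    exact Icc_subset_Icc le_rfl ht.2
  have hFnn : ∀ t ∈ Icc (0:ℝ) T, 0 ≤ F t := by
    intro t ht
    exact intervalIntegral.integral_nonneg ht.1
      (fun τ hτ => hgpos τ ⟨hτ.1, hτ.2.trans ht.2⟩)
  have hFc : ContinuousOn F (Icc 0 T) := by
    apply (intervalIntegral.continuousOn_primitive (f := g) (a := 0) (b := T) hgI).congr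
    intro x hx
    exact intervalIntegral.integral_of_le hx.1
  have hFd : ∀ t ∈ Ico (0:ℝ) T, HasDerivWithinAt F (g t) (Ici t) t := by
    intro t ht
    have hmem : Icc (0:ℝ) T ∈ nhdsWithin t (Ioi t) :=
      Filter.mem_of_superset (Ioo_mem_nhdsGT_of_mem ⟨le_rfl, ht.2⟩)
        (fun z hz => ⟨ht.1.trans hz.1.le, hz.2.le⟩)
    exact intervalIntegral.integral_hasDerivWithinAt_right (hint t ⟨ht.1, ht.2.le⟩)
      ⟨Icc 0 T, hmem, hgI.aestronglyMeasurable⟩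
      ((hg t ⟨ht.1, ht.2.le⟩).mono_of_mem_nhdsWithin hmem)
  have key := norm_le_gronwallBound_of_norm_deriv_right_le (δ := 0) (K := b) (ε := a)
    hFc hFd (by simp [hFdef]) ?_
  · intro t ht
    have hFb := key t ht
    rw [Real.norm_eq_abs, abs_of_nonneg (hFnn t ht)] at hFb
    rw [gronwallBound_of_K_ne_0 hb0.ne'] at hFb
    calc g t ≤ a + b * F t := h t ht
    _ ≤ a + b * (0 * Real.exp (b * (t - 0)) + a / b * (Real.exp (b * (t - 0)) - 1)) := by
        nlinarith
    _ = a * Real.exp (b * t) := by field_simp; ring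
    _ ≤ a * Real.exp (b * T) := by
        have := Real.exp_le_exp.2 (mul_le_mul_of_nonneg_left ht.2 hb)
        nlinarith [Real.exp_pos (b * t)]
  · intro t ht
    have h1 := h t ⟨ht.1, ht.2.le⟩
    have h2 := hgpos t ⟨ht.1, ht.2.le⟩
    have h3 := hFnn t ⟨ht.1, ht.2.le⟩
    rw [Real.norm_eq_abs, Real.norm_eq_abs, abs_of_nonneg h2, abs_of_nonneg h3]
    linarith

set_option maxHeartbeats 1000000 in
/-- finite determining modes — two bounded solutions of the
semilinear equation with the same observation and the same low-frequency part
coincide, provided they are close enough (with a uniform threshold `1/(K·L)`). -/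
theorem stmt_14
    {X : Type*} [NormedAddCommGroup X] [InnerProductSpace ℝ X] [CompleteSpace X]
    (T R₀ M L 𝔠 : ℝ) (hT : 0 < T) (hR₀ : 0 < R₀) (hM : 0 < M) (hL : 0 < L) (h𝔠 : 0 < 𝔠)
    (U : ℝ → X →L[ℝ] X)
    (hU0 : U 0 = ContinuousLinearMap.id ℝ X)
    (hUadd : ∀ a b : ℝ, U (a + b) = (U a).comp (U b))
    (hUiso : ∀ (t : ℝ) (x : X), ‖U t x‖ = ‖x‖)
    (hUcont : ∀ x : X, Continuous fun t : ℝ => U t x)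
    -- `Q` is an orthogonal projection commuting with the group `U`
    (Q : X →L[ℝ] X)
    (hQidem : Q.comp Q = Q)
    (hQsa : ∀ x y : X, ⟪Q x, y⟫ = ⟪x, Q y⟫)
    (hQU : ∀ t : ℝ, Q.comp (U t) = (U t).comp Q)
    (Cop : X →L[ℝ] X)
    -- the nonlinearity
    (f : X → X) (Df : X → X →L[ℝ] X)
    (hdiff : ∀ x : X, HasFDerivAt f (Df x) x)
    (hDfM : ∀ x ∈ Metric.closedBall (0 : X) (2 * R₀), ‖Df x‖ ≤ M)
    (hDfL : ∀ x ∈ Metric.closedBall (0 : X) (2 * R₀),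
      ∀ y ∈ Metric.closedBall (0 : X) (2 * R₀), ‖Df x - Df y‖ ≤ L * ‖x - y‖) :
    ∃ Kc : ℝ, 0 < Kc ∧
      ∀ (u u' h : ℝ → X) (S : ℝ → X →L[ℝ] X),
        ContinuousOn u (Icc 0 T) → ContinuousOn u' (Icc 0 T) →
        (∀ t ∈ Icc (0:ℝ) T, ‖u t‖ ≤ R₀) → (∀ t ∈ Icc (0:ℝ) T, ‖u' t‖ ≤ R₀) →
        IntegrableOn h (Icc 0 T) →
        -- both are mild solutions with the same source `h`
        (∀ t ∈ Icc (0:ℝ) T,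
          u t = U t (u 0) + ∫ τ in (0:ℝ)..t, U (t - τ) (f (u τ) + h τ)) →
        (∀ t ∈ Icc (0:ℝ) T,
          u' t = U t (u' 0) + ∫ τ in (0:ℝ)..t, U (t - τ) (f (u' τ) + h τ)) →
        -- same observation
        (∀ t ∈ Icc (0:ℝ) T, Cop (u t) = Cop (u' t)) →
        -- same low-frequency part
        (∀ t ∈ Icc (0:ℝ) T, u t - Q (u t) = u' t - Q (u' t)) →
        -- `S` is the evolution operator of the potential `τ ↦ Q ∘ Df(u'(τ))`
        (∀ x : X, ContinuousOn (fun t => S t x) (Icc 0 T)) →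
        (∀ x : X, ∀ t ∈ Icc (0:ℝ) T,
          S t x = U t x + ∫ τ in (0:ℝ)..t, U (t - τ) (Q (Df (u' τ) (S τ x)))) →
        -- observability inequality on the range of `Q`
        (∀ w₀ ∈ Set.range Q,
          ‖w₀‖ ^ 2 ≤ 𝔠 ^ 2 * ∫ t in Icc (0:ℝ) T, ‖Cop (S t w₀)‖ ^ 2) →
        (⨆ t : Icc (0:ℝ) T, ‖u (t : ℝ) - u' (t : ℝ)‖) < 1 / (Kc * L) →
        ∀ t ∈ Icc (0:ℝ) T, u t = u' t := by
  have hepos : (0:ℝ) < Real.exp (M * T) := Real.exp_pos _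
  set e : ℝ := Real.exp (M * T) with he
  set Cc : ℝ := 𝔠 * Real.sqrt T * ‖Cop‖ * T * (e * e) with hCcdef
  have hCc0 : 0 ≤ Cc :=
    mul_nonneg (mul_nonneg (mul_nonneg (mul_nonneg h𝔠.le (Real.sqrt_nonneg T))
      (norm_nonneg Cop)) hT.le) (mul_nonneg hepos.le hepos.le)
  refine ⟨Cc + 1, by linarith, ?_⟩
  intro u u' h S hu_c hu'_c huR hu'R hhI hu_eq hu'_eq hobs hlow hScont hSeq hobsQ hsmall
  have hT0 : (0:ℝ) ∈ Icc (0:ℝ) T := ⟨le_rfl, hT.le⟩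
  -- joint continuity of the group action
  have φcont : Continuous fun p : ℝ × X => U p.1 p.2 := by
    rw [continuous_iff_continuousAt]
    rintro ⟨s₀, x₀⟩
    have h1 : Filter.Tendsto (fun p : ℝ × X => U p.1 (p.2 - x₀)) (nhds (s₀, x₀)) (nhds 0) := by
      have hb : Filter.Tendsto (fun p : ℝ × X => ‖p.2 - x₀‖) (nhds (s₀, x₀)) (nhds 0) := by
        have h4 : Filter.Tendsto (fun p : ℝ × X => p.2 - x₀) (nhds (s₀, x₀)) (nhds 0) := by
          have := (continuous_snd.sub (continuous_const (y := x₀))).tendsto ((s₀, x₀) : ℝ × X)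
          convert this using 2 <;> simp
        simpa using h4.norm
      exact squeeze_zero_norm (fun p => le_of_eq (hUiso _ _)) hb
    have h2 : Filter.Tendsto (fun p : ℝ × X => U p.1 x₀) (nhds (s₀, x₀)) (nhds (U s₀ x₀)) :=
      ((hUcont x₀).tendsto s₀).comp continuous_fst.continuousAt
    have h3 := h1.add h2
    rw [zero_add] at h3
    have heq : (fun p : ℝ × X => U p.1 (p.2 - x₀) + U p.1 x₀) = fun p : ℝ × X => U p.1 p.2 := by
      funext p; rw [← map_add]; congr 1; abel
    rw [heq] at h3
    exact h3
  -- basic facts about `Q`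
  have hQQ : ∀ x, Q (Q x) = Q x := fun x => by
    have := ContinuousLinearMap.ext_iff.mp hQidem x
    simpa using this
  have hQnorm : ∀ x : X, ‖Q x‖ ≤ ‖x‖ := by
    intro x
    by_cases hx : Q x = 0
    · simp [hx]
    · have h1 : ‖Q x‖ ^ 2 = ⟪Q x, Q x⟫ := (real_inner_self_eq_norm_sq _).symm
      have h2 : ⟪Q x, Q x⟫ = ⟪x, Q x⟫ := by rw [hQsa, hQQ]
      have h3 : ⟪x, Q x⟫ ≤ ‖x‖ * ‖Q x‖ := real_inner_le_norm _ _
      have h4 : 0 < ‖Q x‖ := norm_pos_iff.2 hx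
      nlinarith
  have hQU' : ∀ (s : ℝ) (x : X), Q (U s x) = U s (Q x) := fun s x => by
    have := ContinuousLinearMap.ext_iff.mp (hQU s) x
    simpa using this
  -- supremum
  have hw_c : ContinuousOn (fun s => u s - u' s) (Icc 0 T) := hu_c.sub hu'_c
  have hg_c : ContinuousOn (fun s => ‖u s - u' s‖) (Icc 0 T) := hw_c.norm
  set ε : ℝ := ⨆ t : Icc (0:ℝ) T, ‖u (t : ℝ) - u' (t : ℝ)‖ with hεdef
  have hbdd : BddAbove (Set.range fun t : Icc (0:ℝ) T => ‖u (t : ℝ) - u' (t : ℝ)‖) := by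
    have himg := (isCompact_Icc.image_of_continuousOn hg_c).bddAbove
    have hre : (Set.range fun t : Icc (0:ℝ) T => ‖u (t : ℝ) - u' (t : ℝ)‖)
        = (fun s => ‖u s - u' s‖) '' Icc 0 T := by
      ext y; constructor
      · rintro ⟨⟨s, hs⟩, rfl⟩; exact ⟨s, hs, rfl⟩
      · rintro ⟨s, hs, rfl⟩; exact ⟨⟨s, hs⟩, rfl⟩
    rw [hre]; exact himg
  have hle : ∀ s ∈ Icc (0:ℝ) T, ‖u s - u' s‖ ≤ ε := fun s hs => le_ciSup hbdd ⟨s, hs⟩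
  have hε0 : 0 ≤ ε := (norm_nonneg _).trans (hle 0 hT0)
  -- low frequency : `w = Q w`
  have hwQ : ∀ s ∈ Icc (0:ℝ) T, Q (u s - u' s) = u s - u' s := by
    intro s hs
    have h' := sub_eq_zero_of_eq (hlow s hs)
    have h3 : u s - u' s - (Q (u s) - Q (u' s))
        = u s - Q (u s) - (u' s - Q (u' s)) := by abel
    rw [map_sub]
    have h4 : u s - u' s - (Q (u s) - Q (u' s)) = 0 := by rw [h3, h']
    have := sub_eq_zero.mp h4
    exact this.symm
  -- balls
  have hball : ∀ s ∈ Icc (0:ℝ) T, u s ∈ Metric.closedBall (0:X) (2*R₀) := fun s hs => by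
    rw [Metric.mem_closedBall, dist_zero_right]; exact (huR s hs).trans (by linarith)
  have hball' : ∀ s ∈ Icc (0:ℝ) T, u' s ∈ Metric.closedBall (0:X) (2*R₀) := fun s hs => by
    rw [Metric.mem_closedBall, dist_zero_right]; exact (hu'R s hs).trans (by linarith)
  -- continuity of Df ∘ u'
  have hLnn : LipschitzOnWith L.toNNReal Df (Metric.closedBall (0:X) (2*R₀)) := by
    apply LipschitzOnWith.of_dist_le_mul
    intro x hx y hy
    rw [dist_eq_norm, dist_eq_norm, Real.coe_toNNReal _ hL.le]
    exact hDfL x hx y hy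
  have hDfcont : ContinuousOn (fun τ => Df (u' τ)) (Icc 0 T) :=
    hLnn.continuousOn.comp hu'_c (fun s hs => hball' s hs)
  have hfc : Continuous f := by
    rw [continuous_iff_continuousAt]; exact fun x => (hdiff x).continuousAt
  -- Lipschitz bound for f
  have hfLip : ∀ s ∈ Icc (0:ℝ) T, ‖f (u s) - f (u' s)‖ ≤ M * ‖u s - u' s‖ := fun s hs =>
    (convex_closedBall _ _).norm_image_sub_le_of_norm_hasFDerivWithin_le
      (fun z hz => (hdiff z).hasFDerivWithinAt) hDfM (hball' s hs) (hball s hs)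
  -- quadratic Taylor bound
  have hTaylor : ∀ s ∈ Icc (0:ℝ) T,
      ‖f (u s) - f (u' s) - Df (u' s) (u s - u' s)‖ ≤ L * ‖u s - u' s‖ * ‖u s - u' s‖ := by
    intro s hs
    have hseg : ∀ z ∈ segment ℝ (u' s) (u s), ‖Df z - Df (u' s)‖ ≤ L * ‖u s - u' s‖ := by
      rintro z ⟨a, b, ha, hb, hab, rfl⟩
      have ha' : a = 1 - b := by linarith
      subst ha'
      have hb1 : b ≤ 1 := by linarith
      have hzsub : (1 - b) • u' s + b • u s - u' s = b • (u s - u' s) := by module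
      have hzmem : (1 - b) • u' s + b • u s ∈ Metric.closedBall (0:X) (2*R₀) := by
        rw [Metric.mem_closedBall, dist_zero_right]
        calc ‖(1 - b) • u' s + b • u s‖ ≤ ‖(1 - b) • u' s‖ + ‖b • u s‖ := norm_add_le _ _
        _ = (1 - b) * ‖u' s‖ + b * ‖u s‖ := by
            rw [norm_smul, norm_smul, Real.norm_eq_abs, Real.norm_eq_abs,
              abs_of_nonneg ha, abs_of_nonneg hb]
        _ ≤ (1 - b) * R₀ + b * R₀ :=
            add_le_add (mul_le_mul_of_nonneg_left (hu'R s hs) ha)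
              (mul_le_mul_of_nonneg_left (huR s hs) hb)
        _ = R₀ := by ring
        _ ≤ 2 * R₀ := by linarith
      calc ‖Df ((1 - b) • u' s + b • u s) - Df (u' s)‖
          ≤ L * ‖(1 - b) • u' s + b • u s - u' s‖ := hDfL _ hzmem _ (hball' s hs)
      _ = L * (b * ‖u s - u' s‖) := by
          rw [hzsub, norm_smul, Real.norm_eq_abs, abs_of_nonneg hb]
      _ ≤ L * ‖u s - u' s‖ := by
          apply mul_le_mul_of_nonneg_left ?_ hL.le
          nlinarith [norm_nonneg (u s - u' s)]
    exact (convex_segment _ _).norm_image_sub_le_of_norm_hasFDerivWithin_le'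
      (fun z _ => (hdiff z).hasFDerivWithinAt) hseg
      (left_mem_segment ℝ _ _) (right_mem_segment ℝ _ _)
  -- interval integrability of `τ ↦ U (t-τ) (g τ)` for continuous `g`
  have hucc : ∀ (gg : ℝ → X), ContinuousOn gg (Icc 0 T) → ∀ t ∈ Icc (0:ℝ) T,
      IntervalIntegrable (fun τ => U (t - τ) (gg τ)) volume 0 t := by
    intro gg hgg t ht
    apply ContinuousOn.intervalIntegrable
    have hsub : uIcc (0:ℝ) t ⊆ Icc 0 T := by
      rw [uIcc_of_le ht.1]; exact Icc_subset_Icc le_rfl ht.2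
    have hcon : ContinuousOn (fun τ => U (t - τ) (gg τ)) (Icc 0 T) :=
      φcont.comp_continuousOn
        (((continuous_const.sub continuous_id).continuousOn).prodMk hgg)
    exact hcon.mono hsub
  have hH_int : ∀ t ∈ Icc (0:ℝ) T, IntervalIntegrable (fun τ => U (t - τ) (h τ)) volume 0 t := by
    intro t ht
    rw [intervalIntegrable_iff_integrableOn_Ioc_of_le ht.1]
    have hsub : Ioc (0:ℝ) t ⊆ Icc 0 T := fun z hz => ⟨hz.1.le, hz.2.trans ht.2⟩
    have hhm : AEStronglyMeasurable h (volume.restrict (Ioc 0 t)) :=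
      (hhI.mono_set hsub).aestronglyMeasurable
    have hmeas : AEStronglyMeasurable (fun τ => U (t - τ) (h τ)) (volume.restrict (Ioc 0 t)) := by
      have hpair : AEStronglyMeasurable (fun τ => ((t - τ : ℝ), h τ))
          (volume.restrict (Ioc 0 t)) :=
        ((continuous_const.sub continuous_id).aestronglyMeasurable).prodMk hhm
      exact φcont.comp_aestronglyMeasurable hpair
    apply Integrable.mono' ((hhI.mono_set hsub).norm) hmeas
    exact Filter.Eventually.of_forall (fun τ => le_of_eq (hUiso _ _))
  -- the equation for the difference `w`
  have hw_eq : ∀ t ∈ Icc (0:ℝ) T, u t - u' t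
      = U t (u 0 - u' 0) + ∫ τ in (0:ℝ)..t, U (t - τ) (f (u τ) - f (u' τ)) := by
    intro t ht
    have hA := hucc (fun τ => f (u τ)) (hfc.comp_continuousOn hu_c) t ht
    have hB := hucc (fun τ => f (u' τ)) (hfc.comp_continuousOn hu'_c) t ht
    have hH := hH_int t ht
    have e1 : u t = U t (u 0)
        + ((∫ τ in (0:ℝ)..t, U (t - τ) (f (u τ))) + ∫ τ in (0:ℝ)..t, U (t - τ) (h τ)) := by
      rw [hu_eq t ht]; congr 1
      rw [← intervalIntegral.integral_add hA hH]
      congr 1; funext τ; rw [map_add]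
    have e2 : u' t = U t (u' 0)
        + ((∫ τ in (0:ℝ)..t, U (t - τ) (f (u' τ))) + ∫ τ in (0:ℝ)..t, U (t - τ) (h τ)) := by
      rw [hu'_eq t ht]; congr 1
      rw [← intervalIntegral.integral_add hB hH]
      congr 1; funext τ; rw [map_add]
    have e3 : (∫ τ in (0:ℝ)..t, U (t - τ) (f (u τ))) - ∫ τ in (0:ℝ)..t, U (t - τ) (f (u' τ))
        = ∫ τ in (0:ℝ)..t, U (t - τ) (f (u τ) - f (u' τ)) := by
      rw [← intervalIntegral.integral_sub hA hB]
      congr 1; funext τ; rw [map_sub]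
    rw [e1, e2, map_sub, ← e3]
    abel
  -- first Gronwall : `‖w t‖ ≤ ‖w 0‖ e^{MT}`
  have hgron1 : ∀ t ∈ Icc (0:ℝ) T, ‖u t - u' t‖ ≤ ‖u 0 - u' 0‖ * e := by
    apply my_gronwall hT.le hg_c (fun s _ => norm_nonneg _) (norm_nonneg _) hM.le
    intro t ht
    have hsubIcc : Icc (0:ℝ) t ⊆ Icc 0 T := Icc_subset_Icc le_rfl ht.2
    have hnormint : IntervalIntegrable (fun τ => ‖f (u τ) - f (u' τ)‖) volume 0 t := by
      apply ContinuousOn.intervalIntegrable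
      have : ContinuousOn (fun τ => ‖f (u τ) - f (u' τ)‖) (Icc 0 T) :=
        ((hfc.comp_continuousOn hu_c).sub (hfc.comp_continuousOn hu'_c)).norm
      exact this.mono (by rw [uIcc_of_le ht.1]; exact hsubIcc)
    have hgint : IntervalIntegrable (fun τ => M * ‖u τ - u' τ‖) volume 0 t := by
      apply ContinuousOn.intervalIntegrable
      exact (continuousOn_const.mul hg_c).mono (by rw [uIcc_of_le ht.1]; exact hsubIcc)
    have h2 : ‖∫ τ in (0:ℝ)..t, U (t - τ) (f (u τ) - f (u' τ))‖
        ≤ M * ∫ τ in (0:ℝ)..t, ‖u τ - u' τ‖ := by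
      calc ‖∫ τ in (0:ℝ)..t, U (t - τ) (f (u τ) - f (u' τ))‖
          ≤ ∫ τ in (0:ℝ)..t, ‖U (t - τ) (f (u τ) - f (u' τ))‖ :=
            intervalIntegral.norm_integral_le_integral_norm ht.1
      _ = ∫ τ in (0:ℝ)..t, ‖f (u τ) - f (u' τ)‖ := by
            congr 1; funext τ; rw [hUiso]
      _ ≤ ∫ τ in (0:ℝ)..t, M * ‖u τ - u' τ‖ := by
            apply intervalIntegral.integral_mono_on ht.1 hnormint hgint
            exact fun τ hτ => hfLip τ (hsubIcc hτ)
      _ = M * ∫ τ in (0:ℝ)..t, ‖u τ - u' τ‖ := by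
            rw [← intervalIntegral.integral_const_mul]
    calc ‖u t - u' t‖
        = ‖U t (u 0 - u' 0) + ∫ τ in (0:ℝ)..t, U (t - τ) (f (u τ) - f (u' τ))‖ := by
          rw [← hw_eq t ht]
    _ ≤ ‖U t (u 0 - u' 0)‖ + ‖∫ τ in (0:ℝ)..t, U (t - τ) (f (u τ) - f (u' τ))‖ :=
          norm_add_le _ _
    _ ≤ ‖u 0 - u' 0‖ + M * ∫ τ in (0:ℝ)..t, ‖u τ - u' τ‖ := by
          rw [hUiso]; linarith
  -- remainder term
  set r : ℝ → X := fun τ => f (u τ) - f (u' τ) - Df (u' τ) (u τ - u' τ) with hrdef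
  have hr_c : ContinuousOn r (Icc 0 T) :=
    ((hfc.comp_continuousOn hu_c).sub (hfc.comp_continuousOn hu'_c)).sub
      (hDfcont.clm_apply hw_c)
  have hr_bound : ∀ τ ∈ Icc (0:ℝ) T, ‖r τ‖ ≤ L * (ε * ε) := by
    intro τ hτ
    have h1 := hTaylor τ hτ
    have h2 := hle τ hτ
    have h3 : ‖u τ - u' τ‖ * ‖u τ - u' τ‖ ≤ ε * ε :=
      mul_le_mul h2 h2 (norm_nonneg _) hε0
    calc ‖r τ‖ ≤ L * ‖u τ - u' τ‖ * ‖u τ - u' τ‖ := h1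
    _ ≤ L * (ε * ε) := by rw [mul_assoc]; exact mul_le_mul_of_nonneg_left h3 hL.le
  -- the low-frequency form of the equation for `w`
  have hwQsplit : ∀ t ∈ Icc (0:ℝ) T, u t - u' t = U t (u 0 - u' 0)
      + ((∫ τ in (0:ℝ)..t, U (t - τ) (Q (Df (u' τ) (u τ - u' τ))))
        + ∫ τ in (0:ℝ)..t, U (t - τ) (Q (r τ))) := by
    intro t ht
    have hIfd : IntervalIntegrable (fun τ => U (t - τ) (f (u τ) - f (u' τ))) volume 0 t :=
      hucc _ ((hfc.comp_continuousOn hu_c).sub (hfc.comp_continuousOn hu'_c)) t ht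
    have hP1 : IntervalIntegrable (fun τ => U (t - τ) (Q (Df (u' τ) (u τ - u' τ)))) volume 0 t :=
      hucc _ (Q.continuous.comp_continuousOn (hDfcont.clm_apply hw_c)) t ht
    have hP2 : IntervalIntegrable (fun τ => U (t - τ) (Q (r τ))) volume 0 t :=
      hucc _ (Q.continuous.comp_continuousOn hr_c) t ht
    have step1 : u t - u' t = Q (u t - u' t) := (hwQ t ht).symm
    rw [step1, hw_eq t ht, map_add, hQU',
      ← ContinuousLinearMap.intervalIntegral_comp_comm Q hIfd, hwQ 0 hT0]
    congr 1
    rw [← intervalIntegral.integral_add hP1 hP2]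
    congr 1; funext τ
    rw [hQU', ← map_add (U (t - τ)), ← map_add Q]
    congr 2
    rw [hrdef]; exact (add_sub_cancel _ _).symm
  -- equation for `d = w - v`
  have hd_c : ContinuousOn (fun s => (u s - u' s) - S s (u 0 - u' 0)) (Icc 0 T) :=
    hw_c.sub (hScont (u 0 - u' 0))
  have hd_eq : ∀ t ∈ Icc (0:ℝ) T, (u t - u' t) - S t (u 0 - u' 0)
      = (∫ τ in (0:ℝ)..t, U (t - τ) (Q (Df (u' τ) ((u τ - u' τ) - S τ (u 0 - u' 0)))))
        + ∫ τ in (0:ℝ)..t, U (t - τ) (Q (r τ)) := by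
    intro t ht
    have hP1 : IntervalIntegrable (fun τ => U (t - τ) (Q (Df (u' τ) (u τ - u' τ)))) volume 0 t :=
      hucc _ (Q.continuous.comp_continuousOn (hDfcont.clm_apply hw_c)) t ht
    have hPv : IntervalIntegrable
        (fun τ => U (t - τ) (Q (Df (u' τ) (S τ (u 0 - u' 0))))) volume 0 t :=
      hucc _ (Q.continuous.comp_continuousOn (hDfcont.clm_apply (hScont _))) t ht
    have e4 : (∫ τ in (0:ℝ)..t, U (t - τ) (Q (Df (u' τ) ((u τ - u' τ) - S τ (u 0 - u' 0)))))
        = (∫ τ in (0:ℝ)..t, U (t - τ) (Q (Df (u' τ) (u τ - u' τ))))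
          - ∫ τ in (0:ℝ)..t, U (t - τ) (Q (Df (u' τ) (S τ (u 0 - u' 0)))) := by
      rw [← intervalIntegral.integral_sub hP1 hPv]
      congr 1; funext τ
      rw [map_sub (Df (u' τ)), map_sub Q, map_sub (U (t - τ))]
    rw [hwQsplit t ht, hSeq (u 0 - u' 0) t ht, e4]
    abel
  -- second Gronwall : `‖d t‖ ≤ T L ε² e^{MT}`
  have haux0 : (0:ℝ) ≤ T * (L * (ε * ε)) :=
    mul_nonneg hT.le (mul_nonneg hL.le (mul_nonneg hε0 hε0))
  have hgron2 : ∀ t ∈ Icc (0:ℝ) T,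
      ‖(u t - u' t) - S t (u 0 - u' 0)‖ ≤ (T * (L * (ε * ε))) * e := by
    apply my_gronwall hT.le hd_c.norm (fun s _ => norm_nonneg _) haux0 hM.le
    intro t ht
    have hsubIcc : Icc (0:ℝ) t ⊆ Icc 0 T := Icc_subset_Icc le_rfl ht.2
    have huIcc : uIcc (0:ℝ) t ⊆ Icc 0 T := by
      rw [uIcc_of_le ht.1]; exact hsubIcc
    have hQd_c : ContinuousOn
        (fun τ => Q (Df (u' τ) ((u τ - u' τ) - S τ (u 0 - u' 0)))) (Icc 0 T) :=
      Q.continuous.comp_continuousOn (hDfcont.clm_apply hd_c)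
    have hint1 : IntervalIntegrable
        (fun τ => ‖Q (Df (u' τ) ((u τ - u' τ) - S τ (u 0 - u' 0)))‖) volume 0 t :=
      (hQd_c.norm.mono huIcc).intervalIntegrable
    have hint2 : IntervalIntegrable
        (fun τ => M * ‖(u τ - u' τ) - S τ (u 0 - u' 0)‖) volume 0 t :=
      ((continuousOn_const.mul hd_c.norm).mono huIcc).intervalIntegrable
    have hint3 : IntervalIntegrable (fun τ => ‖Q (r τ)‖) volume 0 t :=
      ((Q.continuous.comp_continuousOn hr_c).norm.mono huIcc).intervalIntegrable
    have b1 : ‖∫ τ in (0:ℝ)..t, U (t - τ) (Q (Df (u' τ) ((u τ - u' τ) - S τ (u 0 - u' 0))))‖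
        ≤ M * ∫ τ in (0:ℝ)..t, ‖(u τ - u' τ) - S τ (u 0 - u' 0)‖ := by
      calc ‖∫ τ in (0:ℝ)..t, U (t - τ) (Q (Df (u' τ) ((u τ - u' τ) - S τ (u 0 - u' 0))))‖
          ≤ ∫ τ in (0:ℝ)..t, ‖U (t - τ) (Q (Df (u' τ) ((u τ - u' τ) - S τ (u 0 - u' 0))))‖ :=
            intervalIntegral.norm_integral_le_integral_norm ht.1
      _ = ∫ τ in (0:ℝ)..t, ‖Q (Df (u' τ) ((u τ - u' τ) - S τ (u 0 - u' 0)))‖ := by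
            congr 1; funext τ; rw [hUiso]
      _ ≤ ∫ τ in (0:ℝ)..t, M * ‖(u τ - u' τ) - S τ (u 0 - u' 0)‖ := by
            apply intervalIntegral.integral_mono_on ht.1 hint1 hint2
            intro τ hτ
            calc ‖Q (Df (u' τ) ((u τ - u' τ) - S τ (u 0 - u' 0)))‖
                ≤ ‖Df (u' τ) ((u τ - u' τ) - S τ (u 0 - u' 0))‖ := hQnorm _
            _ ≤ ‖Df (u' τ)‖ * ‖(u τ - u' τ) - S τ (u 0 - u' 0)‖ :=
                  (Df (u' τ)).le_opNorm _
            _ ≤ M * ‖(u τ - u' τ) - S τ (u 0 - u' 0)‖ :=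
                  mul_le_mul_of_nonneg_right (hDfM _ (hball' τ (hsubIcc hτ))) (norm_nonneg _)
      _ = M * ∫ τ in (0:ℝ)..t, ‖(u τ - u' τ) - S τ (u 0 - u' 0)‖ := by
            rw [← intervalIntegral.integral_const_mul]
    have b2 : ‖∫ τ in (0:ℝ)..t, U (t - τ) (Q (r τ))‖ ≤ T * (L * (ε * ε)) := by
      calc ‖∫ τ in (0:ℝ)..t, U (t - τ) (Q (r τ))‖
          ≤ ∫ τ in (0:ℝ)..t, ‖U (t - τ) (Q (r τ))‖ :=
            intervalIntegral.norm_integral_le_integral_norm ht.1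
      _ = ∫ τ in (0:ℝ)..t, ‖Q (r τ)‖ := by congr 1; funext τ; rw [hUiso]
      _ ≤ ∫ τ in (0:ℝ)..t, (L * (ε * ε)) := by
            apply intervalIntegral.integral_mono_on ht.1 hint3 intervalIntegrable_const
            intro τ hτ
            exact (hQnorm _).trans (hr_bound τ (hsubIcc hτ))
      _ = t * (L * (ε * ε)) := by
            rw [intervalIntegral.integral_const, smul_eq_mul, sub_zero]
      _ ≤ T * (L * (ε * ε)) :=
            mul_le_mul_of_nonneg_right ht.2 (mul_nonneg hL.le (mul_nonneg hε0 hε0))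
    calc ‖(u t - u' t) - S t (u 0 - u' 0)‖
        = ‖(∫ τ in (0:ℝ)..t, U (t - τ) (Q (Df (u' τ) ((u τ - u' τ) - S τ (u 0 - u' 0)))))
            + ∫ τ in (0:ℝ)..t, U (t - τ) (Q (r τ))‖ := by rw [← hd_eq t ht]
    _ ≤ ‖∫ τ in (0:ℝ)..t, U (t - τ) (Q (Df (u' τ) ((u τ - u' τ) - S τ (u 0 - u' 0))))‖
          + ‖∫ τ in (0:ℝ)..t, U (t - τ) (Q (r τ))‖ := norm_add_le _ _
    _ ≤ T * (L * (ε * ε))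
          + M * ∫ τ in (0:ℝ)..t, ‖(u τ - u' τ) - S τ (u 0 - u' 0)‖ := by linarith
  -- observability
  have hCop0 : ∀ t ∈ Icc (0:ℝ) T, Cop (u t - u' t) = 0 := by
    intro t ht
    rw [map_sub, hobs t ht, sub_self]
  have hCopv : ∀ t ∈ Icc (0:ℝ) T,
      ‖Cop (S t (u 0 - u' 0))‖ ≤ ‖Cop‖ * ((T * (L * (ε * ε))) * e) := by
    intro t ht
    have h1 : Cop (S t (u 0 - u' 0))
        = - Cop ((u t - u' t) - S t (u 0 - u' 0)) := by
      rw [map_sub Cop, hCop0 t ht]; abel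
    rw [h1, norm_neg]
    calc ‖Cop ((u t - u' t) - S t (u 0 - u' 0))‖
        ≤ ‖Cop‖ * ‖(u t - u' t) - S t (u 0 - u' 0)‖ := Cop.le_opNorm _
    _ ≤ ‖Cop‖ * ((T * (L * (ε * ε))) * e) :=
        mul_le_mul_of_nonneg_left (hgron2 t ht) (norm_nonneg _)
  have hβ0 : (0:ℝ) ≤ ‖Cop‖ * ((T * (L * (ε * ε))) * e) :=
    mul_nonneg (norm_nonneg _) (mul_nonneg haux0 hepos.le)
  have hw0 : ‖u 0 - u' 0‖ ≤ 𝔠 * Real.sqrt T * (‖Cop‖ * ((T * (L * (ε * ε))) * e)) := by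
    have hsq := hobsQ (u 0 - u' 0) ⟨u 0 - u' 0, hwQ 0 hT0⟩
    have hIcont : ContinuousOn (fun t => ‖Cop (S t (u 0 - u' 0))‖ ^ 2) (Icc 0 T) :=
      ((Cop.continuous.comp_continuousOn (hScont _)).norm).pow 2
    have hIint : IntegrableOn (fun t => ‖Cop (S t (u 0 - u' 0))‖ ^ 2) (Icc 0 T) :=
      hIcont.integrableOn_Icc
    have hconst : IntegrableOn (fun _ : ℝ => (‖Cop‖ * ((T * (L * (ε * ε))) * e)) ^ 2)
        (Icc (0:ℝ) T) := integrableOn_const (by rw [Real.volume_Icc]; exact ENNReal.ofReal_ne_top)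
    have hintle : (∫ t in Icc (0:ℝ) T, ‖Cop (S t (u 0 - u' 0))‖ ^ 2)
        ≤ (‖Cop‖ * ((T * (L * (ε * ε))) * e)) ^ 2 * T := by
      calc (∫ t in Icc (0:ℝ) T, ‖Cop (S t (u 0 - u' 0))‖ ^ 2)
          ≤ ∫ _ in Icc (0:ℝ) T, (‖Cop‖ * ((T * (L * (ε * ε))) * e)) ^ 2 := by
            apply setIntegral_mono_on hIint hconst measurableSet_Icc
            intro t ht
            exact pow_le_pow_left₀ (norm_nonneg _) (hCopv t ht) 2
      _ = (‖Cop‖ * ((T * (L * (ε * ε))) * e)) ^ 2 * T := by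
            rw [setIntegral_const, smul_eq_mul, Real.volume_real_Icc_of_le hT.le, sub_zero,
              mul_comm]
    have hsq2 : ‖u 0 - u' 0‖ ^ 2
        ≤ (𝔠 * Real.sqrt T * (‖Cop‖ * ((T * (L * (ε * ε))) * e))) ^ 2 := by
      have hTs : Real.sqrt T ^ 2 = T := Real.sq_sqrt hT.le
      calc ‖u 0 - u' 0‖ ^ 2 ≤ 𝔠 ^ 2 * ∫ t in Icc (0:ℝ) T, ‖Cop (S t (u 0 - u' 0))‖ ^ 2 := hsq
      _ ≤ 𝔠 ^ 2 * ((‖Cop‖ * ((T * (L * (ε * ε))) * e)) ^ 2 * T) :=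
          mul_le_mul_of_nonneg_left hintle (by positivity)
      _ = (𝔠 * Real.sqrt T * (‖Cop‖ * ((T * (L * (ε * ε))) * e))) ^ 2 := by
          have expand : (𝔠 * Real.sqrt T * (‖Cop‖ * ((T * (L * (ε * ε))) * e))) ^ 2
              = Real.sqrt T ^ 2 * (𝔠 ^ 2 * (‖Cop‖ * ((T * (L * (ε * ε))) * e)) ^ 2) := by ring
          rw [expand, hTs]; ring
    have hrhs0 : (0:ℝ) ≤ 𝔠 * Real.sqrt T * (‖Cop‖ * ((T * (L * (ε * ε))) * e)) :=
      mul_nonneg (mul_nonneg h𝔠.le (Real.sqrt_nonneg T)) hβ0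
    calc ‖u 0 - u' 0‖ = Real.sqrt (‖u 0 - u' 0‖ ^ 2) := (Real.sqrt_sq (norm_nonneg _)).symm
    _ ≤ Real.sqrt ((𝔠 * Real.sqrt T * (‖Cop‖ * ((T * (L * (ε * ε))) * e))) ^ 2) :=
        Real.sqrt_le_sqrt hsq2
    _ = 𝔠 * Real.sqrt T * (‖Cop‖ * ((T * (L * (ε * ε))) * e)) := Real.sqrt_sq hrhs0
  -- conclusion
  have hfinal : ∀ t ∈ Icc (0:ℝ) T, ‖u t - u' t‖ ≤ Cc * (L * (ε * ε)) := by
    intro t ht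
    calc ‖u t - u' t‖ ≤ ‖u 0 - u' 0‖ * e := hgron1 t ht
    _ ≤ 𝔠 * Real.sqrt T * (‖Cop‖ * ((T * (L * (ε * ε))) * e)) * e :=
        mul_le_mul_of_nonneg_right hw0 hepos.le
    _ = Cc * (L * (ε * ε)) := by rw [hCcdef]; ring
  have hsup : ε ≤ Cc * (L * (ε * ε)) := by
    have hne : Nonempty ↥(Icc (0:ℝ) T) := (Set.nonempty_Icc.mpr hT.le).to_subtype
    rw [hεdef]
    exact ciSup_le (fun t => hfinal t t.2)
  have hεz : ε = 0 := by
    by_contra hne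
    have hεpos : 0 < ε := lt_of_le_of_ne hε0 (Ne.symm hne)
    have hKL : 0 < (Cc + 1) * L := by nlinarith
    rw [lt_div_iff₀ hKL] at hsmall
    have h1 : Cc * (L * (ε * ε)) ≤ (Cc + 1) * (L * (ε * ε)) :=
      mul_le_mul_of_nonneg_right (by linarith) (mul_nonneg hL.le (mul_nonneg hε0 hε0))
    have h2 : (Cc + 1) * (L * (ε * ε)) = (ε * ((Cc + 1) * L)) * ε := by ring
    have h3 : (ε * ((Cc + 1) * L)) * ε < 1 * ε := mul_lt_mul_of_pos_right hsmall hεpos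
    linarith
  intro t ht
  have h1 := hle t ht
  rw [hεz] at h1
  have h2 : ‖u t - u' t‖ = 0 := le_antisymm h1 (norm_nonneg _)
  exact sub_eq_zero.mp (norm_eq_zero.mp h2)
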